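/- For all Schröder paths π₁ and π₂ and all integers k ≥ 1, the concatenation N π₁ E π₂ (a north step, followed by π₁, followed by an east step, followed by π₂) is a Schröder path, and τ_k(N π₁ E π₂) = τ_k(π₁) + τ_{k−1}(π₁) + τ_k(π₂). -/

import Mathlib

/-- A step of a lattice path: north, east, or diagonal. -/
inductive Step : Type where
  | N : Step
  | E : Step
  | D : Step
deriving DecidableEq

/-- A word over `{N, E, D}` is a Schröder path when it has equally many `N`s and `E`s
and every prefix has at least as many `N`s as `E`s. -/
def IsSchroder (w : List Step) : Prop :=
  w.count Step.N = w.count Step.E ∧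
  ∀ p : List Step, p <+: w → p.count Step.E ≤ p.count Step.N

/-- Helper for `tauPath`: sum of `binom(ht(s), k-1)` over east and diagonal steps,
where `h` is the current height. -/
def tauAux (k : ℕ) : ℕ → List Step → ℕ
  | _, [] => 0
  | h, Step.N :: w => tauAux k (h + 1) w
  | h, Step.E :: w => Nat.choose h (k - 1) + tauAux k (h - 1) w
  | h, Step.D :: w => Nat.choose h (k - 1) + tauAux k h w

/-- `τ_k` of a Schröder path: `binom(0,k-1) + Σ_s binom(ht(s),k-1)` over east and
diagonal steps `s`, with the convention `τ_0 = 0`. -/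
def tauPath (k : ℕ) (w : List Step) : ℕ :=
  if k = 0 then 0 else Nat.choose 0 (k - 1) + tauAux k 0 w

theorem my_prefix_append {p l₁ l₂ : List Step} (h : p <+: l₁ ++ l₂) :
    p <+: l₁ ∨ ∃ r, p = l₁ ++ r ∧ r <+: l₂ := by
  induction l₁ generalizing p with
  | nil => exact Or.inr ⟨p, rfl, h⟩
  | cons a l ih =>
    cases p with
    | nil => exact Or.inl (List.nil_prefix)
    | cons b q =>
      rw [List.cons_append, List.cons_prefix_cons] at h
      obtain ⟨rfl, hq⟩ := h
      rcases ih hq with h' | ⟨r, rfl, hr⟩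
      · exact Or.inl (List.cons_prefix_cons.mpr ⟨rfl, h'⟩)
      · exact Or.inr ⟨r, rfl, hr⟩

theorem tauAux_append (k : ℕ) (w v : List Step) : ∀ h : ℕ,
    (∀ p, p <+: w → p.count Step.E ≤ p.count Step.N + h) →
    tauAux k h (w ++ v) =
      tauAux k h w + tauAux k (h + w.count Step.N - w.count Step.E) v := by
  induction w with
  | nil => intro h _; simp [tauAux]
  | cons a w ih =>
    intro h hp
    cases a with
    | N =>
      have hr := ih (h+1) (fun p hpp => by
        have := hp (Step.N :: p) (List.cons_prefix_cons.mpr ⟨rfl, hpp⟩)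
        simp [List.count_cons] at this ⊢; omega)
      have harg : h + 1 + w.count Step.N - w.count Step.E =
          h + (Step.N :: w).count Step.N - (Step.N :: w).count Step.E := by
        simp [List.count_cons]; omega
      simp only [List.cons_append, tauAux]
      rw [harg] at hr; first | (rw [hr]; omega) | rw [hr]
    | E =>
      have h1 : 1 ≤ h := by
        have := hp [Step.E] ⟨w, rfl⟩
        simpa using this
      have hcw : w.count Step.E ≤ w.count Step.N + (h - 1) := by
        have := hp (Step.E :: w) (List.prefix_refl _)
        simp [List.count_cons] at this; omega
      have hr := ih (h-1) (fun p hpp => by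
        have := hp (Step.E :: p) (List.cons_prefix_cons.mpr ⟨rfl, hpp⟩)
        simp [List.count_cons] at this ⊢; omega)
      have harg : h - 1 + w.count Step.N - w.count Step.E =
          h + (Step.E :: w).count Step.N - (Step.E :: w).count Step.E := by
        simp [List.count_cons]; omega
      simp only [List.cons_append, tauAux]
      rw [harg] at hr; first | (rw [hr]; omega) | rw [hr]
    | D =>
      have hr := ih h (fun p hpp => by
        have := hp (Step.D :: p) (List.cons_prefix_cons.mpr ⟨rfl, hpp⟩)
        simp [List.count_cons] at this ⊢; omega)
      have harg : h + w.count Step.N - w.count Step.E =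
          h + (Step.D :: w).count Step.N - (Step.D :: w).count Step.E := by
        simp [List.count_cons]
      simp only [List.cons_append, tauAux]
      rw [harg] at hr; first | (rw [hr]; omega) | rw [hr]

theorem tauAux_one (w : List Step) : ∀ h h', tauAux 1 h w = tauAux 1 h' w := by
  induction w with
  | nil => intros; rfl
  | cons a w ih => intro h h'; cases a <;> simp [tauAux, Nat.choose_zero_right, ih _ h']

theorem tauAux_shift (j : ℕ) (w : List Step) : ∀ h : ℕ,
    (∀ p, p <+: w → p.count Step.E ≤ p.count Step.N + h) →
    tauAux (j+2) (h+1) w = tauAux (j+2) h w + tauAux (j+1) h w := by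
  induction w with
  | nil => intros; rfl
  | cons a w ih =>
    intro h hp
    have pascal : Nat.choose (h+1) (j+2-1) = Nat.choose h (j+2-1) + Nat.choose h (j+1-1) := by
      show (h+1).choose (j+1) = h.choose (j+1) + h.choose j
      rw [Nat.choose_succ_succ']
      omega
    cases a with
    | N =>
      simp only [tauAux]
      exact ih (h+1) (fun p hpp => by
        have := hp (Step.N :: p) (List.cons_prefix_cons.mpr ⟨rfl, hpp⟩)
        simp [List.count_cons] at this ⊢; omega)
    | E =>
      have h1 : 1 ≤ h := by
        have := hp [Step.E] ⟨w, rfl⟩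
        simpa using this
      simp only [tauAux]
      have hrec := ih (h-1) (fun p hpp => by
        have := hp (Step.E :: p) (List.cons_prefix_cons.mpr ⟨rfl, hpp⟩)
        simp [List.count_cons] at this ⊢; omega)
      have hh : h + 1 - 1 = (h - 1) + 1 := by omega
      rw [hh, hrec]
      omega
    | D =>
      simp only [tauAux]
      have hrec := ih h (fun p hpp => by
        have := hp (Step.D :: p) (List.cons_prefix_cons.mpr ⟨rfl, hpp⟩)
        simp [List.count_cons] at this ⊢; omega)
      rw [hrec]
      omega

/-- For Schröder paths π₁, π₂ and k ≥ 1, the concatenation N π₁ E π₂ is a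
Schröder path and τ_k(N π₁ E π₂) = τ_k(π₁) + τ_{k−1}(π₁) + τ_k(π₂). -/
theorem stmt_4 (w1 w2 : List Step) (h1 : IsSchroder w1) (h2 : IsSchroder w2)
    (k : ℕ) (hk : 1 ≤ k) :
    IsSchroder (Step.N :: w1 ++ Step.E :: w2) ∧
    tauPath k (Step.N :: w1 ++ Step.E :: w2) =
      tauPath k w1 + tauPath (k - 1) w1 + tauPath k w2 := by
  obtain ⟨h1c, h1p⟩ := h1
  obtain ⟨h2c, h2p⟩ := h2
  constructor
  · constructor
    · simp [List.count_append, List.count_cons]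
      omega
    · intro p hp
      cases p with
      | nil => simp
      | cons b q =>
        rw [List.cons_append, List.cons_prefix_cons] at hp
        obtain ⟨rfl, hq⟩ := hp
        rcases my_prefix_append hq with hq1 | ⟨r, rfl, hr⟩
        · have := h1p q hq1
          simp [List.count_cons]; omega
        · cases r with
          | nil =>
            have := h1p w1 (List.prefix_refl _)
            simp [List.count_append, List.count_cons]; omega
          | cons c r' =>
            rw [List.cons_prefix_cons] at hr
            obtain ⟨rfl, hr'⟩ := hr
            have := h2p r' hr'
            simp [List.count_append, List.count_cons]; omega
  · have hw1 : ∀ h : ℕ, ∀ p, p <+: w1 → p.count Step.E ≤ p.count Step.N + h :=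
      fun h p hp => le_trans (h1p p hp) (Nat.le_add_right _ _)
    have happ := tauAux_append k w1 (Step.E :: w2) 1 (hw1 1)
    have hbal : 1 + w1.count Step.N - w1.count Step.E = 1 := by omega
    rw [hbal] at happ
    have hEs : tauAux k 1 (Step.E :: w2) = Nat.choose 1 (k-1) + tauAux k 0 w2 := rfl
    have hne : k ≠ 0 := by omega
    simp only [tauPath, if_neg hne]
    have hstep : tauAux k 0 ((Step.N :: w1) ++ Step.E :: w2) =
        tauAux k 1 (w1 ++ Step.E :: w2) := rfl
    rw [hstep, happ, hEs]
    match k, hk with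
    | 1, _ =>
      simp only [Nat.sub_self, if_pos rfl]
      rw [tauAux_one w1 1 0]
      simp
      omega
    | (j+2), _ =>
      have hne' : j + 2 - 1 ≠ 0 := by omega
      rw [if_neg hne']
      have hshift := tauAux_shift j w1 0 (hw1 0)
      have hch : Nat.choose 1 (j+2-1) = Nat.choose 0 (j+2-1) + Nat.choose 0 (j+2-1-1) := by
        cases j <;> simp [Nat.choose]
      have h21 : j + 2 - 1 = j + 1 := rfl
      rw [h21] at *
      rw [hshift]
      have : Nat.choose 1 (j+1) = Nat.choose 0 (j+1) + Nat.choose 0 j := by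
        cases j <;> simp [Nat.choose]
      simp only [Nat.add_sub_cancel] at *
      omega
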